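/- If H : Δ → ℝ satisfies generalized Shannon additivity with α = 2 and H is bounded on Δ₂, then H(p₁,p₂) = H(p₂,p₁) for all (p₁,p₂) ∈ Δ₂. -/

import Mathlib

open Real

/-- A finite stochastic vector: nonnegative entries summing to 1. -/
def IsStochastic (l : List ℝ) : Prop :=
  (∀ x ∈ l, 0 ≤ x) ∧ l.sum = 1

/-- Generalized Shannon additivity with parameter `α`: merging two adjacent
components of a stochastic vector. Powers are real powers (`rpow`). -/
def GSA (α : ℝ) (H : List ℝ → ℝ) : Prop :=
  ∀ (l₁ l₂ : List ℝ) (a b : ℝ), IsStochastic (l₁ ++ a :: b :: l₂) → 0 < a + b →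
    H (l₁ ++ a :: b :: l₂) =
      H (l₁ ++ (a + b) :: l₂) + (a + b) ^ α * H [a / (a + b), b / (a + b)]

theorem stmt_10 (H : List ℝ → ℝ) (hH : GSA 2 H)
    (hbdd : ∃ M : ℝ, ∀ p ∈ Set.Icc (0 : ℝ) 1, |H [p, 1 - p]| ≤ M)
    (p₁ p₂ : ℝ) (h₁ : 0 ≤ p₁) (h₂ : 0 ≤ p₂) (hsum : p₁ + p₂ = 1) :
    H [p₁, p₂] = H [p₂, p₁] := by
  obtain ⟨M, hM⟩ := hbdd
  set f : ℝ → ℝ := fun p => H [p, 1 - p] with hfdef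
  have hfa : ∀ a : ℝ, f a = H [a, 1 - a] := fun a => rfl
  have hrpow : ∀ t : ℝ, t ^ (2:ℝ) = t ^ 2 := fun t => by
    rw [show (2:ℝ) = ((2:ℕ):ℝ) by norm_num, Real.rpow_natCast]
  -- the fundamental equation
  have hE : ∀ x y : ℝ, 0 ≤ x → 0 ≤ y → x + y ≤ 1 → 0 < x + y → x < 1 →
      f (x + y) + (x + y) ^ 2 * f (x / (x + y))
        = f x + (1 - x) ^ 2 * f (y / (1 - x)) := by
    intro x y hx hy hxy1 hxy0 hx1
    have hst : IsStochastic ([] ++ x :: y :: [1 - x - y]) := by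
      constructor
      · intro t ht
        simp only [List.nil_append, List.mem_cons, List.mem_singleton,
          List.not_mem_nil, or_false] at ht
        rcases ht with h | h | h <;> subst h <;> linarith
      · simp only [List.nil_append, List.sum_cons, List.sum_nil]
        ring
    have h1 := hH [] [1 - x - y] x y hst hxy0
    have hst2 : IsStochastic ([x] ++ y :: (1 - x - y) :: []) := by
      constructor
      · intro t ht
        simp only [List.cons_append, List.nil_append, List.mem_cons,
          List.mem_singleton, List.not_mem_nil, or_false] at ht
        rcases ht with h | h | h <;> subst h <;> linarith
      · simp only [List.cons_append, List.nil_append, List.sum_cons, List.sum_nil]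
        ring
    have h2 := hH [x] [] y (1 - x - y) hst2 (by linarith)
    simp only [List.nil_append, List.cons_append] at h1 h2
    have hs0 : x + y ≠ 0 := ne_of_gt hxy0
    have h1x : (1:ℝ) - x ≠ 0 := ne_of_gt (by linarith)
    have e1 : 1 - x - y = 1 - (x + y) := by ring
    have e2 : y / (x + y) = 1 - x / (x + y) := by field_simp; ring
    have e3 : y + (1 - x - y) = 1 - x := by ring
    rw [e3] at h2
    have e4 : (1 - x - y) / (1 - x) = 1 - y / (1 - x) := by field_simp
    rw [e4] at h2
    rw [e1] at h1 h2
    rw [e2] at h1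
    rw [hrpow] at h1 h2
    rw [← hfa (x + y), ← hfa (x / (x + y))] at h1
    rw [← hfa x, ← hfa (y / (1 - x))] at h2
    linarith [h1, h2]
  have hM0 : 0 ≤ M := le_trans (abs_nonneg _) (hM 0 (by norm_num))
  have hf0 : f 0 = 0 := by
    have h := hE 0 (1/2) (by norm_num) (by norm_num) (by norm_num) (by norm_num) (by norm_num)
    norm_num at h
    linarith
  have hf1 : f 1 = 0 := by
    have h := hE (1/2) (1/2) (by norm_num) (by norm_num) (by norm_num) (by norm_num) (by norm_num)
    norm_num at h
    linarith
  set g : ℝ → ℝ := fun p => f p - f (1 - p) with hgdef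
  have hga : ∀ p : ℝ, g p = f p - f (1 - p) := fun p => rfl
  have hg : ∀ p : ℝ, 0 ≤ p → p ≤ 1 → |g p| ≤ 2 * M := by
    intro p hp0 hp1
    have h1 : |f p| ≤ M := by rw [hfa]; exact hM p ⟨hp0, hp1⟩
    have h2 : |f (1 - p)| ≤ M := by rw [hfa]; exact hM (1 - p) ⟨by linarith, by linarith⟩
    rw [hga, abs_le] at *
    constructor <;> [linarith [h1.1, h2.2]; linarith [h1.2, h2.1]]
  have hR : ∀ x : ℝ, 0 ≤ x → x ≤ 1/2 → g x = (1 - x)^2 * g (x / (1 - x)) := by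
    intro x hx0 hx2
    have h1x : (1:ℝ) - x ≠ 0 := ne_of_gt (by linarith)
    have h := hE x (1 - 2*x) hx0 (by linarith) (by linarith) (by linarith) (by linarith)
    rw [show x + (1 - 2*x) = 1 - x by ring] at h
    rw [show (1 - 2*x) / (1 - x) = 1 - x / (1 - x) by field_simp; ring] at h
    rw [hga, hga]
    linear_combination -h
  have hL : ∀ x : ℝ, 0 < x → x ≤ 1/2 → g (2*x) = 2 * g x := by
    intro x hx0 hx2
    have hx0' : x ≠ 0 := ne_of_gt hx0
    have h1x : (1:ℝ) - x ≠ 0 := ne_of_gt (by linarith)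
    have ehalf : x / (x + x) = 1/2 := by
      rw [show x + x = 2*x by ring, div_eq_iff (by positivity)]; ring
    have hD := hE x x hx0.le hx0.le (by linarith) (by linarith) (by linarith)
    rw [ehalf, show x + x = 2*x by ring] at hD
    have hB := hE (1 - 2*x) x (by linarith) hx0.le (by linarith) (by linarith) (by linarith)
    rw [show (1 - 2*x) + x = 1 - x by ring] at hB
    rw [show (1:ℝ) - (1 - 2*x) = 2*x by ring] at hB
    rw [show x / (2*x) = 1/2 by rw [div_eq_iff (by positivity)]; ring] at hB
    rw [show (1 - 2*x) / (1 - x) = 1 - x / (1 - x) by field_simp; ring] at hB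
    have hRx := hR x hx0.le hx2
    rw [hga, hga] at hRx
    rw [hga, hga]
    linear_combination hD + hB - hRx
  set G : ℝ → ℝ := fun r => r^2 * g (1/r) with hGdef
  have hGa : ∀ r : ℝ, G r = r^2 * g (1/r) := fun r => rfl
  have hGstep : ∀ r : ℝ, 2 ≤ r → G r = G (r - 1) := by
    intro r hr
    have hr0 : r ≠ 0 := by intro h; rw [h] at hr; norm_num at hr
    have hr1 : r - 1 ≠ 0 := by intro h; linarith
    have hx0 : (0:ℝ) ≤ 1/r := by positivity
    have hx2 : 1/r ≤ 1/2 := by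
      rw [div_le_div_iff₀ (by linarith) (by norm_num)]; linarith
    have h := hR (1/r) hx0 hx2
    rw [show (1/r) / (1 - 1/r) = 1/(r-1) by field_simp] at h
    rw [hGa, hGa, h]
    field_simp
  have hGdouble : ∀ r : ℝ, 1 ≤ r → G (2*r) = 2 * G r := by
    intro r hr
    have hr0 : r ≠ 0 := by intro h; rw [h] at hr; norm_num at hr
    have hx0 : (0:ℝ) < 1/(2*r) := by positivity
    have hx2 : 1/(2*r) ≤ 1/2 := by
      rw [div_le_div_iff₀ (by positivity) (by norm_num)]; linarith
    have h := hL (1/(2*r)) hx0 hx2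
    rw [show 2 * (1/(2*r)) = 1/r by field_simp] at h
    rw [hGa, hGa, h]
    ring
  have base : ∀ r : ℝ, 1 ≤ r → r ≤ 2 → |G r| ≤ 8 * M := by
    intro r h1 h2
    have hr0 : (0:ℝ) < r := by linarith
    have hb := hg (1/r) (by positivity) (by rw [div_le_one hr0]; linarith)
    rw [hGa, abs_mul, abs_of_nonneg (sq_nonneg r)]
    have hr4 : r^2 ≤ 4 := by nlinarith
    calc r^2 * |g (1/r)| ≤ 4 * (2*M) := mul_le_mul hr4 hb (abs_nonneg _) (by norm_num)
      _ = 8 * M := by ring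
  have hGbound : ∀ r : ℝ, 1 ≤ r → |G r| ≤ 8 * M := by
    have hind : ∀ n : ℕ, ∀ r : ℝ, 1 ≤ r → r ≤ 2 + n → |G r| ≤ 8 * M := by
      intro n
      induction n with
      | zero => intro r h1 h2; exact base r h1 (by simpa using h2)
      | succ k ih =>
        intro r h1 h2
        by_cases hc : r ≤ 2 + k
        · exact ih r h1 hc
        · push_neg at hc
          have h2r : 2 ≤ r := by
            have : (0:ℝ) ≤ k := Nat.cast_nonneg k
            linarith
          rw [hGstep r h2r]
          have : r ≤ 2 + (k+1 : ℕ) := h2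
          push_cast at this
          exact ih (r-1) (by linarith) (by linarith)
    intro r h1
    obtain ⟨n, hn⟩ := exists_nat_ge r
    exact hind n r h1 (by linarith)
  have hGpow : ∀ n : ℕ, ∀ r : ℝ, 1 ≤ r → G (2^n * r) = 2^n * G r := by
    intro n
    induction n with
    | zero => intro r hr; norm_num
    | succ k ih =>
      intro r hr
      have h2k : (1:ℝ) ≤ 2^k := one_le_pow₀ (by norm_num)
      have h1 : (1:ℝ) ≤ 2^k * r := by nlinarith
      rw [show (2:ℝ)^(k+1) * r = 2 * (2^k * r) by ring, hGdouble _ h1, ih r hr]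
      ring
  have hGzero : ∀ r : ℝ, 1 ≤ r → G r = 0 := by
    intro r hr
    by_contra hne
    have hpos : 0 < |G r| := abs_pos.mpr hne
    obtain ⟨n, hn⟩ := exists_nat_gt (8 * M / |G r|)
    have h2n : (n:ℝ) < 2^n := by exact_mod_cast (Nat.lt_two_pow_self (n := n))
    have h2k : (1:ℝ) ≤ 2^n := one_le_pow₀ (by norm_num)
    have hb := hGbound (2^n * r) (by nlinarith)
    rw [hGpow n r hr, abs_mul, abs_of_nonneg (by positivity : (0:ℝ) ≤ 2^n)] at hb
    rw [div_lt_iff₀ hpos] at hn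
    nlinarith
  have hgzero : ∀ p : ℝ, 0 < p → p ≤ 1 → g p = 0 := by
    intro p hp0 hp1
    have hr : (1:ℝ) ≤ 1/p := by rw [le_div_iff₀ hp0]; linarith
    have h := hGzero (1/p) hr
    rw [hGa, one_div_one_div] at h
    rcases mul_eq_zero.mp h with h' | h'
    · exact absurd (pow_eq_zero_iff (by norm_num) |>.mp h') (by positivity)
    · exact h'
  have hp2 : p₂ = 1 - p₁ := by linarith
  subst hp2
  have e : (1:ℝ) - (1 - p₁) = p₁ := by ring
  have h2 : f (1 - p₁) = H [1 - p₁, p₁] := by rw [hfa (1 - p₁), e]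
  rw [← hfa p₁, ← h2]
  rcases eq_or_lt_of_le h₁ with h | h
  · rw [← h]; norm_num [hf0, hf1]
  · have hp1 : p₁ ≤ 1 := by linarith
    have := hgzero p₁ h hp1
    rw [hga] at this
    linarith
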